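/- Let Y be a compact metrizable space, M a family of Borel probability measures on Y, and B a countable Boolean subalgebra of Reg(Y) consisting of strongly regular open sets (i.e., μ(cl(A) \ A) = 0 for every A ∈ B and μ ∈ M) and containing a basis for the topology. Let π : St(B) → Y be the canonical map from the Stone space. Then for every μ ∈ M, μ({y ∈ Y : |π⁻¹({y})| = 1}) = 1. -/
import Mathlib


/-- An ultrafilter on a Boolean subalgebra `B` of the regular open algebra of `Y`
(where the meet is intersection and the complement of `A` is `(closure A)ᶜ`). -/
def IsUltrafilterOn {Y : Type*} [TopologicalSpace Y] (B p : Set (Set Y)) : Prop :=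
  p ⊆ B ∧ Set.univ ∈ p ∧ ∅ ∉ p ∧
  (∀ a ∈ p, ∀ b ∈ B, a ⊆ b → b ∈ p) ∧
  (∀ a ∈ p, ∀ b ∈ p, a ∩ b ∈ p) ∧
  (∀ A ∈ B, A ∈ p ∨ (closure A)ᶜ ∈ p)

/-- The set of `y ∈ Y` having a unique `π`-preimage in the Stone space `St(B)`:
`π(p) = y` iff every `A ∈ B` containing `y` lies in `p`. -/
def UniquePreimageSet {Y : Type*} [TopologicalSpace Y] (B : Set (Set Y)) : Set Y :=
  {y : Y | ∃! p : Set (Set Y), IsUltrafilterOn B p ∧ ∀ A ∈ B, y ∈ A → A ∈ p}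

open MeasureTheory

theorem stmt19 {Y : Type*} [TopologicalSpace Y] [CompactSpace Y]
    [TopologicalSpace.MetrizableSpace Y] [MeasurableSpace Y] [BorelSpace Y]
    (M : Set (Measure Y)) (hM : ∀ μ ∈ M, IsProbabilityMeasure μ)
    (B : Set (Set Y)) (hcount : B.Countable)
    (hreg : ∀ A ∈ B, A = interior (closure A))
    (hsreg : ∀ A ∈ B, ∀ μ ∈ M, μ (closure A \ A) = 0)
    (huniv : Set.univ ∈ B) (hempty : ∅ ∈ B)
    (hinter : ∀ A ∈ B, ∀ A' ∈ B, A ∩ A' ∈ B)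
    (hcompl : ∀ A ∈ B, (closure A)ᶜ ∈ B)
    (hbasis : ∀ y : Y, ∀ U : Set Y, IsOpen U → y ∈ U → ∃ A ∈ B, y ∈ A ∧ A ⊆ U) :
    ∀ μ ∈ M, μ (UniquePreimageSet B) = 1 := by
  intro μ hμ
  have hP := hM μ hμ
  -- complement is contained in the union of boundaries
  have hsub : (UniquePreimageSet B)ᶜ ⊆ ⋃ A ∈ B, closure A \ A := by
    intro y hy
    by_contra hcon
    apply hy
    simp only [Set.mem_iUnion, not_exists] at hcon
    have hy' : ∀ A ∈ B, y ∈ A ∨ y ∉ closure A := by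
      intro A hA
      by_cases h : y ∈ A
      · exact Or.inl h
      · refine Or.inr fun hc => hcon A hA ⟨hc, h⟩
    refine ⟨{A | A ∈ B ∧ y ∈ A}, ⟨⟨fun A hA => hA.1, ⟨huniv, trivial⟩,
      fun h => h.2, ?_, ?_, ?_⟩, fun A hA hyA => ⟨hA, hyA⟩⟩, ?_⟩
    · intro a ha b hb hab
      exact ⟨hb, hab ha.2⟩
    · intro a ha b hb
      exact ⟨hinter a ha.1 b hb.1, ha.2, hb.2⟩
    · intro A hA
      rcases hy' A hA with h | h
      · exact Or.inl ⟨hA, h⟩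
      · exact Or.inr ⟨hcompl A hA, h⟩
    · rintro q ⟨⟨hqB, -, hq0, -, hqinter, -⟩, hq2⟩
      ext A
      constructor
      · intro hAq
        refine ⟨hqB hAq, ?_⟩
        by_contra hyA
        have hyc : y ∉ closure A := (hy' A (hqB hAq)).resolve_left hyA
        have hcq : (closure A)ᶜ ∈ q := hq2 _ (hcompl A (hqB hAq)) hyc
        have : A ∩ (closure A)ᶜ ∈ q := hqinter A hAq _ hcq
        have heq : A ∩ (closure A)ᶜ = ∅ := by
          apply Set.eq_empty_of_subset_empty
          intro x hx
          exact hx.2 (subset_closure hx.1)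
        rw [heq] at this
        exact hq0 this
      · intro hA
        exact hq2 A hA.1 hA.2
  have hnull : μ ((UniquePreimageSet B)ᶜ) = 0 := by
    refine measure_mono_null hsub ?_
    refine measure_biUnion_null_iff hcount |>.mpr ?_
    intro A hA
    exact hsreg A hA μ hμ
  have h1 : (1 : ENNReal) ≤ μ (UniquePreimageSet B) := by
    have := measure_union_le (μ := μ) (UniquePreimageSet B) (UniquePreimageSet B)ᶜ
    rw [Set.union_compl_self, measure_univ, hnull, add_zero] at this
    exact this
  exact le_antisymm prob_le_one h1
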